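/- Let X = ℝ² equipped with the supremum norm ‖(a,b)‖ = max(|a|, |b|), and let Ω = {(z₁, z₂) ∈ ℝ² : z₂ < 0}. Let γ : [0,1] → Ω be any rectifiable, almost everywhere differentiable path (e.g. Lipschitz) with γ(0) = (−1,−2), γ(1) = (1,−2), and whose second coordinate satisfies −2 ≤ γ₂(t) < 0 for all t ∈ [0,1]. Then its quasihyperbolic length satisfies ℓ_k(γ) = ∫₀¹ max(|γ₁′(t)|, |γ₂′(t)|) / (−γ₂(t)) dt ≥ 1. -/

import Mathlib

open MeasureTheory Set intervalIntegral

/-- FTC-type inequality for monotone continuous functions. -/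
lemma mono_integral_deriv_le (m : ℝ → ℝ) (hm : Monotone m) (hc : Continuous m) :
    ∫ t in (0:ℝ)..1, deriv m t ≤ m 1 - m 0 := by
  set μ := hm.stieltjesFunction.measure with hμ
  have hF : ∀ x, hm.stieltjesFunction x = m x := by
    intro x
    rw [hm.stieltjesFunction_eq]
    exact rightLim_eq_of_tendsto
      ((hc.tendsto x).mono_left nhdsWithin_le_nhds)
  have hae : ∀ᵐ x ∂(volume : Measure ℝ), deriv m x = (μ.rnDeriv volume x).toReal := by
    filter_upwards [hm.ae_hasDerivAt] with x hx using hx.deriv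
  have h1 : ∫ t in (0:ℝ)..1, deriv m t
      = ∫ t in Ioc (0:ℝ) 1, (μ.rnDeriv volume t).toReal := by
    rw [intervalIntegral.integral_of_le zero_le_one]
    exact integral_congr_ae (ae_restrict_of_ae hae)
  have h2 : ∫ t in Ioc (0:ℝ) 1, (μ.rnDeriv volume t).toReal ≤ (μ (Ioc 0 1)).toReal :=
    Measure.setIntegral_toReal_rnDeriv_le (by
      rw [hμ, StieltjesFunction.measure_Ioc]; exact ENNReal.ofReal_ne_top)
  have h3 : (μ (Ioc 0 1)).toReal = m 1 - m 0 := by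
    rw [hμ, StieltjesFunction.measure_Ioc, hF, hF,
      ENNReal.toReal_ofReal (sub_nonneg.2 (hm zero_le_one))]
  linarith [h1, h2, h3]

/-- FTC-type inequality for Lipschitz functions (lower bound direction). -/
lemma lip_sub_le_integral_deriv (g : ℝ → ℝ) (L : NNReal) (hg : LipschitzWith L g) :
    g 1 - g 0 ≤ ∫ t in (0:ℝ)..1, deriv g t := by
  set m : ℝ → ℝ := fun t => L * t - g t with hmdef
  have hm : Monotone m := by
    intro s t hst
    have := hg.dist_le_mul s t
    simp only [hmdef]
    rw [Real.dist_eq, Real.dist_eq] at this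
    have h2 := abs_le.1 this
    have habs : |s - t| = t - s := by rw [abs_sub_comm]; exact abs_of_nonneg (by linarith)
    rw [habs] at h2
    linarith [h2.1]
  have hcm : Continuous m := (continuous_const.mul continuous_id).sub hg.continuous
  have key := mono_integral_deriv_le m hm hcm
  have hderivbd : ∀ x, |deriv g x| ≤ (L : ℝ) := by
    intro x
    have := norm_deriv_le_of_lipschitzOn (f := g) (x₀ := x) (s := univ) Filter.univ_mem
      (lipschitzOnWith_univ.2 hg)
    simpa using this
  have hint : IntervalIntegrable (deriv g) volume 0 1 := by
    rw [intervalIntegrable_iff_integrableOn_Ioc_of_le zero_le_one]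
    exact Integrable.mono' (integrable_const (L : ℝ))
      (measurable_deriv g).aestronglyMeasurable
      (Filter.Eventually.of_forall (fun x => by simpa using hderivbd x))
  have hae : ∀ᵐ x ∂(volume : Measure ℝ), deriv m x = (L : ℝ) - deriv g x := by
    filter_upwards [hg.ae_differentiableAt] with x hx
    have : HasDerivAt m ((L : ℝ) - deriv g x) x := by
      simpa [hmdef, mul_comm, Pi.sub_def] using ((hasDerivAt_id x).const_mul (L : ℝ)).sub hx.hasDerivAt
    exact this.deriv
  have heq : ∫ t in (0:ℝ)..1, deriv m t = ∫ t in (0:ℝ)..1, ((L : ℝ) - deriv g t) := by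
    rw [intervalIntegral.integral_of_le zero_le_one, intervalIntegral.integral_of_le zero_le_one]
    exact integral_congr_ae (ae_restrict_of_ae hae)
  have hsub : ∫ t in (0:ℝ)..1, ((L : ℝ) - deriv g t)
      = (L : ℝ) - ∫ t in (0:ℝ)..1, deriv g t := by
    rw [intervalIntegral.integral_sub intervalIntegrable_const hint]
    simp
  have hm1 : m 1 - m 0 = (L : ℝ) - (g 1 - g 0) := by simp [hmdef]; ring
  rw [heq, hsub, hm1] at key
  linarith

set_option maxHeartbeats 2000000 in
/-- In `ℝ²` with the supremum norm (here `Fin 2 → ℝ` with the sup norm) and the lower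
half-plane `Ω = {z : z₂ < 0}` (for which `d(z) = −z₂`): any rectifiable, almost everywhere
differentiable (e.g. Lipschitz) path from `(−1,−2)` to `(1,−2)` whose second coordinate
stays in `[−2, 0)` has quasihyperbolic length at least `1`. -/
theorem qhLength_lower_bound_halfPlane_sup
    (γ : ℝ → (Fin 2 → ℝ)) (L : NNReal) (hlip : LipschitzOnWith L γ (Set.Icc 0 1))
    (hdiff : ∀ᵐ t ∂(MeasureTheory.volume.restrict (Set.Icc (0 : ℝ) 1)),
      DifferentiableAt ℝ γ t)
    (h0 : γ 0 = ![-1, -2]) (h1 : γ 1 = ![1, -2])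
    (hsecond : ∀ t ∈ Set.Icc (0 : ℝ) 1, -2 ≤ γ t 1 ∧ γ t 1 < 0) :
    1 ≤ ∫ t in (0 : ℝ)..1, max |deriv γ t 0| |deriv γ t 1| / (-(γ t 1)) := by
  have hle : (0:ℝ) ≤ 1 := zero_le_one
  set G : ℝ → (Fin 2 → ℝ) := Set.IccExtend hle ((Set.Icc (0:ℝ) 1).restrict γ) with hGdef
  have hGeq : ∀ t ∈ Set.Icc (0:ℝ) 1, G t = γ t := by
    intro t ht
    rw [hGdef, Set.IccExtend_of_mem hle _ ht]
    rfl
  have hGlip : LipschitzWith L G := by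
    have := (LipschitzOnWith.to_restrict hlip).comp (LipschitzWith.projIcc hle)
    rw [mul_one] at this; exact this
  set g : ℝ → ℝ := fun t => G t 0 with hgdef
  have hglip : LipschitzWith L g := by
    have := (LipschitzWith.eval (0 : Fin 2)).comp hGlip
    rw [one_mul] at this; exact this
  -- minimum of -(γ t 1) on Icc
  have hcont : ContinuousOn (fun t => -(γ t 1)) (Set.Icc 0 1) :=
    ((continuous_apply (1 : Fin 2)).comp_continuousOn hlip.continuousOn).neg
  obtain ⟨t₀, ht₀, hmin⟩ :=
    isCompact_Icc.exists_isMinOn (Set.nonempty_Icc.2 hle) hcont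
  rw [isMinOn_iff] at hmin
  set ε : ℝ := -(γ t₀ 1) with hεdef
  have hε : 0 < ε := by
    have := (hsecond t₀ ht₀).2
    simp only [hεdef]; linarith
  -- a.e. facts
  have hIoo : ∀ᵐ t ∂volume.restrict (Set.Ioc (0:ℝ) 1), t ∈ Set.Ioo (0:ℝ) 1 := by
    rw [← Measure.restrict_congr_set Ioo_ae_eq_Ioc]
    exact ae_restrict_mem measurableSet_Ioo
  have hdiff' : ∀ᵐ t ∂volume.restrict (Set.Ioc (0:ℝ) 1), DifferentiableAt ℝ γ t :=
    ae_restrict_of_ae_restrict_of_subset Set.Ioc_subset_Icc_self hdiff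
  have hderiv_g : ∀ t ∈ Set.Ioo (0:ℝ) 1, DifferentiableAt ℝ γ t →
      deriv g t = deriv γ t 0 := by
    intro t ht htd
    have hIcc : Set.Icc (0:ℝ) 1 ∈ nhds t := Icc_mem_nhds ht.1 ht.2
    have hev : g =ᶠ[nhds t] fun s => γ s 0 := by
      filter_upwards [hIcc] with s hs
      simp [hgdef, hGeq s hs]
    rw [hev.deriv_eq]
    have hd0 : HasDerivAt (fun s => γ s 0) (deriv γ t 0) t :=
      (ContinuousLinearMap.proj (R := ℝ) (φ := fun _ : Fin 2 => ℝ)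
        (0 : Fin 2)).hasFDerivAt.comp_hasDerivAt t htd.hasDerivAt
    exact hd0.deriv
  have hnum_le : ∀ t ∈ Set.Ioo (0:ℝ) 1,
      max |deriv γ t 0| |deriv γ t 1| ≤ (L:ℝ) := by
    intro t ht
    have hb := norm_deriv_le_of_lipschitzOn (Icc_mem_nhds ht.1 ht.2) hlip
    have h0' : |deriv γ t 0| ≤ ‖deriv γ t‖ := norm_le_pi_norm (deriv γ t) 0
    have h1' : |deriv γ t 1| ≤ ‖deriv γ t‖ := norm_le_pi_norm (deriv γ t) 1
    exact max_le (h0'.trans hb) (h1'.trans hb)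
  -- integrability
  have hφint : IntegrableOn
      (fun t => max |deriv γ t 0| |deriv γ t 1| / (-(γ t 1))) (Set.Ioc 0 1) volume := by
    have hmeasnum : Measurable fun t => max |deriv γ t 0| |deriv γ t 1| :=
      ((measurable_pi_apply (0 : Fin 2)).comp (measurable_deriv γ)).abs.max
        ((measurable_pi_apply (1 : Fin 2)).comp (measurable_deriv γ)).abs
    have hdenom : AEMeasurable (fun t => -(γ t 1))
        (volume.restrict (Set.Ioc 0 1)) :=
      (hcont.mono Set.Ioc_subset_Icc_self).aemeasurable measurableSet_Ioc
    refine Integrable.mono' (integrable_const ((L:ℝ)/ε))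
      ((hmeasnum.aemeasurable.div hdenom).aestronglyMeasurable) ?_
    filter_upwards [hIoo] with t ht
    have htI : t ∈ Set.Icc (0:ℝ) 1 := Set.Ioo_subset_Icc_self ht
    have hpos : 0 < -(γ t 1) := by linarith [(hsecond t htI).2]
    have hεle : ε ≤ -(γ t 1) := hmin t htI
    have hnn : 0 ≤ max |deriv γ t 0| |deriv γ t 1| := le_max_of_le_left (abs_nonneg _)
    rw [Real.norm_eq_abs, abs_of_nonneg (div_nonneg hnn hpos.le)]
    exact div_le_div₀ (by positivity) (hnum_le t ht) hε hεle
  have hgint : IntegrableOn (fun t => deriv g t) (Set.Ioc (0:ℝ) 1) volume := by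
    refine Integrable.mono' (integrable_const (L:ℝ))
      (measurable_deriv g).aestronglyMeasurable ?_
    refine Filter.Eventually.of_forall fun t => ?_
    simpa using norm_deriv_le_of_lipschitzOn (f := g) (x₀ := t) Filter.univ_mem
      (lipschitzOnWith_univ.2 hglip)
  -- pointwise comparison
  have hptwise : ∀ᵐ t ∂volume.restrict (Set.Ioc (0:ℝ) 1),
      deriv g t / 2 ≤ max |deriv γ t 0| |deriv γ t 1| / (-(γ t 1)) := by
    filter_upwards [hIoo, hdiff'] with t ht htd
    have htI : t ∈ Set.Icc (0:ℝ) 1 := Set.Ioo_subset_Icc_self ht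
    have hpos : 0 < -(γ t 1) := by linarith [(hsecond t htI).2]
    have hle2 : -(γ t 1) ≤ 2 := by linarith [(hsecond t htI).1]
    have hnn : 0 ≤ max |deriv γ t 0| |deriv γ t 1| := le_max_of_le_left (abs_nonneg _)
    calc deriv g t / 2 ≤ |deriv γ t 0| / 2 := by
          rw [hderiv_g t ht htd]
          gcongr
          exact le_abs_self _
      _ ≤ max |deriv γ t 0| |deriv γ t 1| / 2 := by gcongr; exact le_max_left _ _
      _ ≤ max |deriv γ t 0| |deriv γ t 1| / (-(γ t 1)) := by gcongr
  -- endpoint values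
  have hg1 : g 1 = 1 := by
    simp only [hgdef]
    rw [hGeq 1 (by norm_num), h1]
    norm_num
  have hg0 : g 0 = -1 := by
    simp only [hgdef]
    rw [hGeq 0 (by norm_num), h0]
    norm_num
  have hkey : (2:ℝ) ≤ ∫ t in (0:ℝ)..1, deriv g t := by
    have := lip_sub_le_integral_deriv g L hglip
    rw [hg1, hg0] at this
    linarith
  have hmono : ∫ t in (0:ℝ)..1, deriv g t / 2
      ≤ ∫ t in (0:ℝ)..1, max |deriv γ t 0| |deriv γ t 1| / (-(γ t 1)) := by
    rw [intervalIntegral.integral_of_le zero_le_one,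
      intervalIntegral.integral_of_le zero_le_one]
    exact integral_mono_ae (hgint.div_const 2) hφint hptwise
  have hdiv : ∫ t in (0:ℝ)..1, deriv g t / 2
      = (∫ t in (0:ℝ)..1, deriv g t) / 2 := intervalIntegral.integral_div 2 _
  linarith
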